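/- Let Φγ be the MAD channel with decay rates γ satisfying γ i j ≥ 0 for i < j and ∑_{i<j} γ i j ≤ 1 for each j. Assume 1 + n2(γ) > n1(γ) and that for every level j with j < d − 1 that is not totally depleted there exists k > j with γ j k ≠ 0. Then rank Φγ(e eᴴ) = n1(γ), where e : Fin d → ℂ is the all-ones vector and e eᴴ = Matrix.vecMulVec e (star e). -/

import Mathlib

open Matrix

/-- The Kraus operator `A₀` of the multi-level amplitude damping channel. -/
noncomputable def madA0 {d : ℕ} (γ : Fin d → Fin d → ℝ) : Matrix (Fin d) (Fin d) ℂ :=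
  Matrix.diagonal fun j => (Real.sqrt (1 - ∑ i ∈ Finset.Iio j, γ i j) : ℂ)

/-- The multi-level amplitude damping (MAD) channel with decay rates `γ`. -/
noncomputable def madChannel {d : ℕ} (γ : Fin d → Fin d → ℝ)
    (X : Matrix (Fin d) (Fin d) ℂ) : Matrix (Fin d) (Fin d) ℂ :=
  madA0 γ * X * (madA0 γ)ᴴ + ∑ j, ∑ i ∈ Finset.Iio j, (γ i j : ℂ) •
    (Matrix.single i j 1 * X * Matrix.single j i 1)

/-- A level `j` is totally depleted if no higher level decays into it and the total decay
rate out of it is one. -/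
def totallyDepleted {d : ℕ} (γ : Fin d → Fin d → ℝ) (j : Fin d) : Prop :=
  (∑ i ∈ Finset.Iio j, γ i j = 1) ∧ ∀ k, j < k → γ j k = 0

/-- The number of levels that are not totally depleted. -/
noncomputable def madN1 {d : ℕ} (γ : Fin d → Fin d → ℝ) : ℕ :=
  Nat.card {j : Fin d // ¬ totallyDepleted γ j}

/-- The number of nonzero decay rates. -/
noncomputable def madN2 {d : ℕ} (γ : Fin d → Fin d → ℝ) : ℕ :=
  Nat.card {p : Fin d × Fin d // p.1 < p.2 ∧ γ p.1 p.2 ≠ 0}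

noncomputable def madV {d : ℕ} (γ : Fin d → Fin d → ℝ) :
    Matrix (Fin d) (Option (Fin d × Fin d)) ℂ := fun a k =>
  match k with
  | none => (Real.sqrt (1 - ∑ i ∈ Finset.Iio a, γ i a) : ℂ)
  | some p => if p.1 < p.2 ∧ a = p.1 then (Real.sqrt (γ p.1 p.2) : ℂ) else 0

theorem madFactor {d : ℕ} (γ : Fin d → Fin d → ℝ)
    (hγ : ∀ i j : Fin d, i < j → 0 ≤ γ i j) :
    madChannel γ (vecMulVec (fun _ => 1) (star fun _ => (1 : ℂ))) = madV γ * (madV γ)ᴴ := by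
  ext a b
  rw [madChannel]
  simp only [Matrix.add_apply, Matrix.mul_apply, madA0, madV, vecMulVec_apply,
    conjTranspose_apply, diagonal_apply, Matrix.sum_apply, Matrix.smul_apply,
    Matrix.single, Matrix.of_apply, Pi.star_apply, star_one, mul_one, smul_eq_mul]
  rw [Fintype.sum_option, Fintype.sum_prod_type]
  simp only [apply_ite (star : ℂ → ℂ), star_zero, Complex.conj_ofReal, ite_and, mul_ite, ite_mul,
    zero_mul, mul_zero, Finset.sum_ite_eq, Finset.sum_ite_eq', Finset.mem_univ, if_true, mul_one, one_mul]
  congr 1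
  have hsq : ∀ x y : Fin d, x < y → (↑(Real.sqrt (γ x y)) : ℂ) * star (↑(Real.sqrt (γ x y)) : ℂ) = (γ x y : ℂ) := by
    intro x y h
    rw [Complex.star_def, Complex.conj_ofReal, ← Complex.ofReal_mul, Real.mul_self_sqrt (hγ x y h)]
  trans (∑ x : Fin d, if b < x ∧ b = a then (γ b x : ℂ) else 0)
  · refine Finset.sum_congr rfl fun x _ => ?_
    by_cases h1 : b < x <;> by_cases h2 : b = a <;>
      simp_all [Finset.mem_Iio, Finset.sum_ite_eq, Finset.sum_eq_zero]
  · symm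
    trans (∑ x : Fin d, ∑ x1 : Fin d, if x < x1 ∧ b = x ∧ a = x then (γ x x1 : ℂ) else 0)
    · refine Finset.sum_congr rfl fun x _ => Finset.sum_congr rfl fun y _ => ?_
      by_cases h1 : x < y <;> by_cases h2 : b = x <;> by_cases h3 : a = x <;>
        simp_all [hsq x y]
    · rw [Finset.sum_eq_single b]
      · refine Finset.sum_congr rfl fun y _ => ?_
        by_cases h1 : b < y <;> by_cases h2 : b = a <;> simp_all [eq_comm]
      · intro x _ hx
        exact Finset.sum_eq_zero fun y _ => by
          by_cases h1 : x < y <;> by_cases h2 : b = x <;> simp_all [eq_comm]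
      · intro h; exact absurd (Finset.mem_univ b) h

theorem madSpanCols {d : ℕ} (γ : Fin d → Fin d → ℝ)
    (hγ : ∀ i j : Fin d, i < j → 0 ≤ γ i j)
    (hγsum : ∀ j : Fin d, ∑ i ∈ Finset.Iio j, γ i j ≤ 1)
    (hrecv : ∀ j : Fin d, (j : ℕ) < d - 1 → ¬ totallyDepleted γ j →
      ∃ k : Fin d, j < k ∧ γ j k ≠ 0) :
    Submodule.span ℂ (Set.range (madV γ)ᵀ) =
      Submodule.span ℂ ((fun a => (Pi.single a 1 : Fin d → ℂ)) '' {a | ¬ totallyDepleted γ a}) := by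
  set c : Fin d → ℝ := fun a => Real.sqrt (1 - ∑ i ∈ Finset.Iio a, γ i a) with hc
  have hnone : (madV γ)ᵀ none = ∑ b : Fin d, (c b : ℂ) • (Pi.single b 1 : Fin d → ℂ) := by
    ext j
    simp [madV, Pi.single_apply, Finset.sum_ite_eq', transpose_apply, Finset.sum_apply,
      mul_ite, mul_one, mul_zero]
    rfl
  have hcol : ∀ p : Fin d × Fin d, p.1 < p.2 →
      (madV γ)ᵀ (some p) = (↑(Real.sqrt (γ p.1 p.2)) : ℂ) • (Pi.single p.1 1 : Fin d → ℂ) := by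
    intro p hp
    ext j
    simp only [transpose_apply, madV, Pi.smul_apply, Pi.single_apply, smul_eq_mul]
    by_cases h : j = p.1 <;> simp [h, hp]
  have fact2 : ∀ a, c a ≠ 0 → ¬ totallyDepleted γ a := by
    intro a hca hdep
    exact hca (by simp [hc, hdep.1])
  have claim1 : ∀ b : Fin d, (∃ k, b < k ∧ γ b k ≠ 0) →
      (Pi.single b 1 : Fin d → ℂ) ∈ Submodule.span ℂ (Set.range (madV γ)ᵀ) := by
    rintro b ⟨k, hk, hγk⟩
    have hs : Real.sqrt (γ b k) ≠ 0 := by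
      rw [Real.sqrt_ne_zero' ]
      exact lt_of_le_of_ne (hγ b k hk) (Ne.symm hγk)
    have : (Pi.single b 1 : Fin d → ℂ) = ((Real.sqrt (γ b k) : ℂ))⁻¹ • (madV γ)ᵀ (some (b,k)) := by
      rw [hcol (b,k) hk, smul_smul, inv_mul_cancel₀ (Complex.ofReal_ne_zero.mpr hs), one_smul]
    rw [this]
    exact Submodule.smul_mem _ _ (Submodule.subset_span ⟨_, rfl⟩)
  apply le_antisymm
  · rw [Submodule.span_le]
    rintro _ ⟨k, rfl⟩
    match k with
    | none =>
      rw [hnone]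
      refine Submodule.sum_mem _ fun b _ => ?_
      by_cases hb : c b = 0
      · rw [hb]; simp
      · exact Submodule.smul_mem _ _ (Submodule.subset_span ⟨b, fact2 b hb, rfl⟩)
    | some p =>
      by_cases hp : p.1 < p.2 ∧ γ p.1 p.2 ≠ 0
      · rw [hcol p hp.1]
        refine Submodule.smul_mem _ _ (Submodule.subset_span ⟨p.1, ?_, rfl⟩)
        intro hdep
        exact hp.2 (hdep.2 p.2 hp.1)
      · have : (madV γ)ᵀ (some p) = 0 := by
          ext j
          simp only [transpose_apply, madV, Pi.zero_apply]
          by_cases h1 : p.1 < p.2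
          · have h2 : γ p.1 p.2 = 0 := by tauto
            simp [h2]
          · simp [h1]
        rw [this]; exact Submodule.zero_mem _
  · rw [Submodule.span_le]
    rintro _ ⟨a, ha, rfl⟩
    simp only [Set.mem_setOf_eq] at ha
    by_cases hex : ∃ k, a < k ∧ γ a k ≠ 0
    · exact claim1 a hex
    · push_neg at hex
      have hzero : ∀ k, a < k → γ a k = 0 := hex
      have hs1 : ∑ i ∈ Finset.Iio a, γ i a ≠ 1 := fun h => ha ⟨h, hzero⟩
      have hca : c a ≠ 0 := by
        rw [hc]
        simp only [ne_eq, Real.sqrt_eq_zero', not_le, not_or]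
        linarith [lt_of_le_of_ne (hγsum a) hs1]
      have hlast : (a : ℕ) = d - 1 := by
        by_contra h
        obtain ⟨k, hk, hγk⟩ := hrecv a (lt_of_le_of_ne (Nat.le_sub_one_of_lt a.isLt) h) ha
        exact hγk (hzero k hk)
      have claim2 : ∀ b : Fin d, b ≠ a →
          (c b : ℂ) • (Pi.single b 1 : Fin d → ℂ) ∈ Submodule.span ℂ (Set.range (madV γ)ᵀ) := by
        intro b hb
        by_cases hcb : c b = 0
        · rw [hcb]; simp
        · refine Submodule.smul_mem _ _ (claim1 b ?_)
          have hbd : (b : ℕ) ≠ d - 1 := fun h => hb (Fin.ext (h.trans hlast.symm))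
          exact hrecv b (lt_of_le_of_ne (Nat.le_sub_one_of_lt b.isLt) hbd) (fact2 b hcb)
      have key : (c a : ℂ) • (Pi.single a 1 : Fin d → ℂ) =
          (madV γ)ᵀ none - ∑ b ∈ Finset.univ.erase a, (c b : ℂ) • (Pi.single b 1 : Fin d → ℂ) := by
        rw [eq_sub_iff_add_eq, Finset.add_sum_erase Finset.univ
          (fun b => ((c b : ℂ) • (Pi.single b 1 : Fin d → ℂ))) (Finset.mem_univ a)]
        exact hnone.symm
      have hsingle : (Pi.single a 1 : Fin d → ℂ) = (c a : ℂ)⁻¹ •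
          ((madV γ)ᵀ none - ∑ b ∈ Finset.univ.erase a, (c b : ℂ) • (Pi.single b 1 : Fin d → ℂ)) := by
        rw [← key, smul_smul, inv_mul_cancel₀ (Complex.ofReal_ne_zero.mpr hca), one_smul]
      show (Pi.single a 1 : Fin d → ℂ) ∈ (Submodule.span ℂ (Set.range (madV γ)ᵀ) : Set (Fin d → ℂ))
      rw [hsingle]
      exact Submodule.smul_mem _ _ (Submodule.sub_mem _ (Submodule.subset_span ⟨none, rfl⟩)
        (Submodule.sum_mem _ fun b hb => claim2 b (Finset.ne_of_mem_erase hb)))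

theorem stmt7 {d : ℕ} (hd : 1 ≤ d) (γ : Fin d → Fin d → ℝ)
    (hγ : ∀ i j : Fin d, i < j → 0 ≤ γ i j)
    (hγsum : ∀ j : Fin d, ∑ i ∈ Finset.Iio j, γ i j ≤ 1)
    (hn : 1 + madN2 γ > madN1 γ)
    (hrecv : ∀ j : Fin d, (j : ℕ) < d - 1 → ¬ totallyDepleted γ j →
      ∃ k : Fin d, j < k ∧ γ j k ≠ 0) :
    (madChannel γ (vecMulVec (fun _ => 1) (star fun _ => (1 : ℂ)))).rank = madN1 γ := by
  classical
  open ComplexOrder in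
  rw [madFactor γ hγ, Matrix.rank_self_mul_conjTranspose, Matrix.rank_eq_finrank_span_cols,
    Matrix.col_def, madSpanCols γ hγ hγsum hrecv]
  haveI : Fintype {a : Fin d // ¬ totallyDepleted γ a} := Fintype.ofFinite _
  have hb : LinearIndependent ℂ
      (fun a : {a : Fin d // ¬ totallyDepleted γ a} => (Pi.single (a : Fin d) 1 : Fin d → ℂ)) := by
    have h2 := (Pi.basisFun ℂ (Fin d)).linearIndependent.comp
      (Subtype.val : {a : Fin d // ¬ totallyDepleted γ a} → Fin d) Subtype.val_injective
    simpa [Function.comp_def] using h2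
  have hcard := finrank_span_eq_card hb
  have hr : Set.range (fun a : {a : Fin d // ¬ totallyDepleted γ a} =>
      (Pi.single (a : Fin d) 1 : Fin d → ℂ)) =
      (fun a => (Pi.single a 1 : Fin d → ℂ)) '' {a | ¬ totallyDepleted γ a} := by
    ext x
    simp [Set.mem_image, Set.mem_range, Subtype.exists]
  rw [hr] at hcard
  rw [hcard, madN1, Nat.card_eq_fintype_card]
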